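/- arXiv:2312.13773 — 4 statements merged into one kernel-verified Lean document; each statement's English description precedes it below -/
import Mathlib

section
/- Suppose the optimal objective value f* of the primal LP is finite, and let ε, δ ≥ 0. If R_ε is positive and finite, then R_ε · r_δ ≤ ε + δ. -/
open Metric Set Filter Topology
open scoped RealInnerProductSpace Classical

/-- Theorem 2.1 of Freund, upper bound: if the optimal value `f*` of the
primal LP is finite and `R_ε` is positive (and finite), then `R_ε · r_δ ≤ ε + δ`. -/
theorem Reps_mul_rdelta_le
    (n : ℕ) (hn : 0 < n)
    (Vp : AffineSubspace ℝ (EuclideanSpace ℝ (Fin n)))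
    (c : EuclideanSpace ℝ (Fin n)) (hcdir : c ∈ Vp.direction)
    (Fp : Set (EuclideanSpace ℝ (Fin n)))
    (hFp : Fp = {x | x ∈ Vp ∧ ∀ i, 0 ≤ x i})
    (fstar : ℝ)
    (hfstar : IsGLB ((fun x => ⟪c, x⟫) '' Fp) fstar)
    (Vd : Set (EuclideanSpace ℝ (Fin n)))
    (hVd : Vd = {s | s - c ∈ Vp.directionᗮ})
    (Fd : Set (EuclideanSpace ℝ (Fin n)))
    (hFd : Fd = {s | s ∈ Vd ∧ ∀ i, 0 ≤ s i})
    (q : EuclideanSpace ℝ (Fin n)) (hqVp : q ∈ Vp)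
    (hqmin : ∀ v ∈ (Vp : Set (EuclideanSpace ℝ (Fin n))), ‖q‖ ≤ ‖v‖)
    (ε δ : ℝ) (hε : 0 ≤ ε) (hδ : 0 ≤ δ)
    (rδ : ℝ)
    (hrδ : IsGreatest {t | ∃ x ∈ Fp, ⟪c, x⟫ ≤ fstar + δ ∧ t = ⨅ i, x i} rδ)
    (Rε : ℝ)
    (hRε : IsGreatest {t | ∃ s ∈ Fd, fstar - ε ≤ -⟪q, s⟫ ∧ t = ∑ i, |s i|} Rε)
    (hRpos : 0 < Rε) :
    Rε * rδ ≤ ε + δ := by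
  obtain ⟨⟨s, hsFd, hsq, hsum⟩, -⟩ := hRε
  obtain ⟨⟨x, hxFp, hcx, hinf⟩, -⟩ := hrδ
  rw [hFd] at hsFd
  obtain ⟨hsVd, hs0⟩ := hsFd
  rw [hVd] at hsVd
  rw [hFp] at hxFp
  obtain ⟨hxVp, hx0⟩ := hxFp
  -- q is orthogonal to the direction of Vp
  have hq_orth : ∀ v ∈ Vp.direction, ⟪q, v⟫ = 0 := by
    intro v hv
    by_contra hne
    have hv0 : v ≠ 0 := by
      rintro rfl; simp at hne
    have hvnorm : (0:ℝ) < ‖v‖ ^ 2 := pow_pos (norm_pos_iff.mpr hv0) 2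
    set t : ℝ := -⟪q, v⟫ / ‖v‖ ^ 2 with ht
    have hmem : q + t • v ∈ Vp := by
      have := AffineSubspace.vadd_mem_of_mem_direction (Submodule.smul_mem _ t hv) hqVp
      simpa [vadd_eq_add, add_comm] using this
    have hle := hqmin _ hmem
    have h2 : ‖q‖ ^ 2 ≤ ‖q + t • v‖ ^ 2 := by
      have := sq_le_sq' (by linarith [norm_nonneg q, norm_nonneg (q + t • v)]) hle
      simpa using this
    have hexp : ‖q + t • v‖ ^ 2 = ‖q‖ ^ 2 + 2 * (t * ⟪q, v⟫) + t ^ 2 * ‖v‖ ^ 2 := by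
      rw [norm_add_sq_real, real_inner_smul_right, norm_smul]
      simp [mul_pow]
    have h3 : (0:ℝ) ≤ 2 * (t * ⟪q, v⟫) + t ^ 2 * ‖v‖ ^ 2 := by
      rw [hexp] at h2; linarith
    have h4 : 2 * (t * ⟪q, v⟫) + t ^ 2 * ‖v‖ ^ 2 = -(⟪q, v⟫ ^ 2 / ‖v‖ ^ 2) := by
      rw [ht]; field_simp; ring
    have h5 : (0:ℝ) < ⟪q, v⟫ ^ 2 / ‖v‖ ^ 2 :=
      div_pos (by positivity) hvnorm
    rw [h4] at h3
    linarith
  have hcq : ⟪q, c⟫ = 0 := hq_orth c hcdir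
  -- x - q ∈ direction
  have hxq : x - q ∈ Vp.direction := by
    have := AffineSubspace.vsub_mem_direction hxVp hqVp
    simpa [vsub_eq_sub] using this
  have horth : ⟪x - q, s - c⟫ = 0 :=
    (Submodule.mem_orthogonal Vp.direction (s - c)).mp hsVd _ hxq
  -- key identity
  have he : ⟪x, s⟫ - ⟪x, c⟫ - ⟪q, s⟫ + ⟪q, c⟫ = 0 := by
    rw [← horth, inner_sub_left, inner_sub_right, inner_sub_right]; ring
  have hkey : ⟪s, x⟫ = ⟪q, s⟫ + ⟪c, x⟫ := by
    have h1 := real_inner_comm x s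
    have h2 := real_inner_comm x c
    linarith
  -- upper bound on ⟪s, x⟫
  have hqs : ⟪q, s⟫ ≤ ε - fstar := by linarith
  have hub : ⟪s, x⟫ ≤ ε + δ := by rw [hkey]; linarith
  -- lower bound: Rε * rδ ≤ ⟪s, x⟫
  have hinner : ⟪s, x⟫ = ∑ i, s i * x i := by
    simp [PiLp.inner_apply, RCLike.inner_apply, starRingEnd_apply]
    exact Finset.sum_congr rfl (fun i _ => mul_comm _ _)
  have hrle : ∀ i, rδ ≤ x i := by
    intro i
    rw [hinf]
    exact ciInf_le (Set.Finite.bddBelow (Set.finite_range _)) i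
  have hlow : Rε * rδ ≤ ⟪s, x⟫ := by
    rw [hinner, hsum, Finset.sum_mul]
    apply Finset.sum_le_sum
    intro i _
    rw [abs_of_nonneg (hs0 i)]
    exact mul_le_mul_of_nonneg_left (hrle i) (hs0 i)
  linarith
end

section
/- Under the stated assumptions, the primal LP sharpness satisfies μ_p = inf_{x ∈ F_p \ X*} (c^T x − f*)/(‖c‖ · Dist(x, X*)) = (1/Dist(0, V_d)) · inf_{x ∈ F_p \ X*} (c^T x − f*)/Dist(x, X*). -/
open Metric Set Filter Topology
open scoped RealInnerProductSpace Classical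

open scoped Pointwise in
private lemma aux_sInf_mul {X : Type*} (a : ℝ) (ha : 0 ≤ a) (g : X → ℝ) (S : Set X) :
    sInf ((fun x => a * g x) '' S) = a * sInf (g '' S) := by
  have h : (fun x => a * g x) '' S = a • (g '' S) := by
    rw [← Set.image_smul, Set.image_image]; rfl
  rw [h, Real.sInf_smul_of_nonneg ha, smul_eq_mul]

private lemma aux_le_infDist {X : Type*} [MetricSpace X] {s : Set X} {x : X} {b : ℝ}
    (hs : s.Nonempty) (h : ∀ y ∈ s, b ≤ dist x y) : b ≤ infDist x s := by
  by_contra hlt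
  push_neg at hlt
  obtain ⟨y, hy, hd⟩ := (infDist_lt_iff hs).mp hlt
  exact absurd (h y hy) (not_le.mpr hd)

/-- Remark, primal case: the primal LP sharpness satisfies
`μ_p = inf_{x ∈ F_p \ X*} (c^T x − f*)/(‖c‖·Dist(x,X*))
     = (1/Dist(0,V_d)) · inf_{x ∈ F_p \ X*} (c^T x − f*)/Dist(x,X*)`. -/
theorem primal_sharpness_alternative_expressions
    (n : ℕ)
    (Vp : AffineSubspace ℝ (EuclideanSpace ℝ (Fin n)))
    (c : EuclideanSpace ℝ (Fin n)) (hcdir : c ∈ Vp.direction) (hc0 : c ≠ 0)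
    (Fp : Set (EuclideanSpace ℝ (Fin n)))
    (hFp : Fp = {x | x ∈ Vp ∧ ∀ i, 0 ≤ x i})
    (fstar : ℝ)
    (hfstar : IsLeast ((fun x => ⟪c, x⟫) '' Fp) fstar)
    (Xstar : Set (EuclideanSpace ℝ (Fin n)))
    (hXstar : Xstar = {x ∈ Fp | ⟪c, x⟫ = fstar})
    (Hstar : Set (EuclideanSpace ℝ (Fin n)))
    (hHstar : Hstar = {x | ⟪c, x⟫ = fstar})
    (Vd : Set (EuclideanSpace ℝ (Fin n)))
    (hVd : Vd = {s | s - c ∈ Vp.directionᗮ})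
    (hPnonopt : (Fp \ Xstar).Nonempty)
    (μp : ℝ)
    (hμp : μp = sInf ((fun x => infDist x ((Vp : Set (EuclideanSpace ℝ (Fin n))) ∩ Hstar)
        / infDist x Xstar) '' (Fp \ Xstar))) :
    μp = sInf ((fun x => (⟪c, x⟫ - fstar) / (‖c‖ * infDist x Xstar)) '' (Fp \ Xstar)) ∧
    μp = (1 / infDist 0 Vd) *
      sInf ((fun x => (⟪c, x⟫ - fstar) / infDist x Xstar) '' (Fp \ Xstar)) := by
  have hcc : (0:ℝ) < ‖c‖ := norm_pos_iff.mpr hc0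
  have hfle : ∀ x ∈ Fp, fstar ≤ ⟪c, x⟫ := fun x hx => hfstar.2 ⟨x, hx, rfl⟩
  -- key geometric lemma
  have key : ∀ x ∈ Fp, infDist x ((Vp : Set (EuclideanSpace ℝ (Fin n))) ∩ Hstar)
      = (⟪c, x⟫ - fstar) / ‖c‖ := by
    intro x hx
    have hxVp : x ∈ Vp := by rw [hFp] at hx; exact hx.1
    have hxge : fstar ≤ ⟪c, x⟫ := hfle x hx
    set t : ℝ := (⟪c, x⟫ - fstar) / ‖c‖^2 with ht
    have ht0 : 0 ≤ t := div_nonneg (sub_nonneg.mpr hxge) (by positivity)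
    set y := x - t • c with hy
    have hyVp : y ∈ Vp := by
      have h1 : (-t) • c ∈ Vp.direction := Submodule.smul_mem _ _ hcdir
      have h2 := AffineSubspace.vadd_mem_of_mem_direction h1 hxVp
      have : (-t) • c +ᵥ x = y := by
        simp [hy, neg_smul, sub_eq_neg_add]
      rwa [this] at h2
    have hyH : y ∈ Hstar := by
      rw [hHstar]
      have : ⟪c, y⟫ = ⟪c, x⟫ - t * ‖c‖^2 := by
        rw [hy, inner_sub_right, real_inner_smul_right, real_inner_self_eq_norm_sq]
      simp only [Set.mem_setOf_eq, this, ht]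
      field_simp
      ring
    have hdxy : dist x y = (⟪c, x⟫ - fstar) / ‖c‖ := by
      rw [dist_eq_norm]
      have : x - y = t • c := by simp [hy]
      rw [this, norm_smul, Real.norm_eq_abs, abs_of_nonneg ht0, ht]
      rw [pow_two]
      field_simp
    apply le_antisymm
    · calc infDist x ((Vp : Set (EuclideanSpace ℝ (Fin n))) ∩ Hstar) ≤ dist x y :=
            infDist_le_dist_of_mem ⟨hyVp, hyH⟩
        _ = (⟪c, x⟫ - fstar) / ‖c‖ := hdxy
    · refine aux_le_infDist ⟨y, hyVp, hyH⟩ fun z hz => ?_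
      have hzH : ⟪c, z⟫ = fstar := by
        have := hz.2; rw [hHstar] at this; exact this
      have h1 : ⟪c, x⟫ - fstar = ⟪c, x - z⟫ := by
        rw [inner_sub_right, hzH]
      rw [div_le_iff₀ hcc, h1]
      calc ⟪c, x - z⟫ ≤ ‖c‖ * ‖x - z‖ := real_inner_le_norm _ _
        _ = dist x z * ‖c‖ := by rw [← dist_eq_norm]; ring
  -- distance from 0 to Vd
  have hVdist : infDist 0 Vd = ‖c‖ := by
    have hcVd : c ∈ Vd := by rw [hVd]; simp
    apply le_antisymm
    · calc infDist 0 Vd ≤ dist 0 c := infDist_le_dist_of_mem hcVd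
        _ = ‖c‖ := by simp
    · refine aux_le_infDist ⟨c, hcVd⟩ fun s hs => ?_
      have hsc : s - c ∈ Vp.directionᗮ := by rw [hVd] at hs; exact hs
      have h1 : ⟪c, s⟫ = ‖c‖^2 := by
        have h0 : ⟪c, s - c⟫ = 0 :=
          (Submodule.mem_orthogonal Vp.direction (s - c)).mp hsc c hcdir
        have := inner_sub_right (𝕜 := ℝ) c s c
        rw [h0, real_inner_self_eq_norm_sq] at this
        linarith [this]
      have h2 : ‖c‖^2 ≤ ‖c‖ * ‖s‖ := by
        rw [← h1]; exact real_inner_le_norm _ _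
      have h3 : ‖c‖ ≤ ‖s‖ := by
        nlinarith
      calc ‖c‖ ≤ ‖s‖ := h3
        _ = dist 0 s := by simp
  -- first equality
  have himg1 : (fun x => infDist x ((Vp : Set (EuclideanSpace ℝ (Fin n))) ∩ Hstar)
      / infDist x Xstar) '' (Fp \ Xstar)
      = (fun x => (⟪c, x⟫ - fstar) / (‖c‖ * infDist x Xstar)) '' (Fp \ Xstar) := by
    apply Set.image_congr
    intro x hx
    rw [key x hx.1, div_div]
  constructor
  · rw [hμp, himg1]
  · rw [hVdist, hμp, himg1]
    have himg2 : (fun x => (⟪c, x⟫ - fstar) / (‖c‖ * infDist x Xstar)) '' (Fp \ Xstar)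
        = (fun x => (1 / ‖c‖) * ((⟪c, x⟫ - fstar) / infDist x Xstar)) '' (Fp \ Xstar) := by
      apply Set.image_congr
      intro x _
      ring
    rw [himg2, aux_sInf_mul _ (by positivity)]
end

section
/- Suppose μ_d > 0 and the set S* of dual optimal solutions is nonempty and bounded. Then for every δ ≥ 0, R_δ ≤ √n · ( δ/(‖q‖ · μ_d) + Dist(0, S*) + Diam(S*) ), where R_δ := sup{ ‖s‖_1 : s ∈ F_d, −q^T s ≥ f* − δ }. -/
open Metric Set Filter Topology
open scoped RealInnerProductSpace Classical

/-- if `μ_d > 0` and `S*` is nonempty and bounded, then for every `δ ≥ 0`,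
`R_δ = sup{‖s‖₁ : s ∈ F_d, −q^T s ≥ f* − δ} ≤ √n·(δ/(‖q‖·μ_d) + Dist(0,S*) + Diam(S*))`;
i.e. every `s ∈ F_d` with `−q^T s ≥ f* − δ` satisfies the bound on `‖s‖₁`. -/
theorem dual_level_set_l1_bound
    (n : ℕ)
    (Vp : AffineSubspace ℝ (EuclideanSpace ℝ (Fin n)))
    (c : EuclideanSpace ℝ (Fin n)) (hcdir : c ∈ Vp.direction) (hc0 : c ≠ 0)
    (fstar : ℝ)
    (Vd : Set (EuclideanSpace ℝ (Fin n)))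
    (hVd : Vd = {s | s - c ∈ Vp.directionᗮ})
    (Fd : Set (EuclideanSpace ℝ (Fin n)))
    (hFd : Fd = {s | s ∈ Vd ∧ ∀ i, 0 ≤ s i})
    (q : EuclideanSpace ℝ (Fin n)) (hqVp : q ∈ Vp)
    (hqmin : ∀ v ∈ (Vp : Set (EuclideanSpace ℝ (Fin n))), ‖q‖ ≤ ‖v‖) (hq0 : q ≠ 0)
    (Sstar : Set (EuclideanSpace ℝ (Fin n)))
    (hSstar : Sstar = {s ∈ Fd | ∀ t ∈ Fd, -⟪q, t⟫ ≤ -⟪q, s⟫})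
    (hSne : Sstar.Nonempty) (hSbdd : Bornology.IsBounded Sstar)
    (μd : ℝ)
    (hμd : μd = sInf ((fun s => (⟪q, s⟫ + fstar) / (‖q‖ * infDist s Sstar)) '' (Fd \ Sstar)))
    (hμd_pos : 0 < μd)
    (δ : ℝ) (hδ : 0 ≤ δ) :
    ∀ s ∈ Fd, fstar - δ ≤ -⟪q, s⟫ →
      ∑ i, |s i| ≤ Real.sqrt n *
        (δ / (‖q‖ * μd) + infDist 0 Sstar + Metric.diam Sstar) := by
  intro s hs hlev
  have hq : (0:ℝ) < ‖q‖ := norm_pos_iff.mpr hq0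
  set d := infDist s Sstar with hd
  -- Step 1: ‖q‖ * μd * d ≤ δ
  have key : ‖q‖ * μd * d ≤ δ := by
    by_cases hmem : s ∈ Sstar
    · have : d = 0 := infDist_zero_of_mem hmem
      rw [this, mul_zero]; exact hδ
    · have himg : (⟪q, s⟫ + fstar) / (‖q‖ * d) ∈
          ((fun s => (⟪q, s⟫ + fstar) / (‖q‖ * infDist s Sstar)) '' (Fd \ Sstar)) :=
        ⟨s, ⟨hs, hmem⟩, rfl⟩
      have hbdd : BddBelow ((fun s => (⟪q, s⟫ + fstar) / (‖q‖ * infDist s Sstar)) '' (Fd \ Sstar)) := by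
        by_contra hnb
        rw [hμd, Real.sInf_of_not_bddBelow hnb] at hμd_pos
        exact lt_irrefl 0 hμd_pos
      have hle : μd ≤ (⟪q, s⟫ + fstar) / (‖q‖ * d) := by
        rw [hμd]; exact csInf_le hbdd himg
      have hden : 0 < ‖q‖ * d := by
        rcases lt_or_eq_of_le (mul_nonneg hq.le (infDist_nonneg (s := Sstar) (x := s))) with h | h
        · exact h
        · exfalso
          rw [← h, div_zero] at hle
          exact absurd (lt_of_lt_of_le hμd_pos hle) (lt_irrefl 0)
      have : μd * (‖q‖ * d) ≤ ⟪q, s⟫ + fstar := by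
        calc μd * (‖q‖ * d) ≤ (⟪q, s⟫ + fstar) / (‖q‖ * d) * (‖q‖ * d) :=
              mul_le_mul_of_nonneg_right hle hden.le
          _ = ⟪q, s⟫ + fstar := div_mul_cancel₀ _ hden.ne'
      have h2 : ⟪q, s⟫ + fstar ≤ δ := by linarith
      calc ‖q‖ * μd * d = μd * (‖q‖ * d) := by ring
        _ ≤ δ := le_trans this h2
  have hd_le : d ≤ δ / (‖q‖ * μd) := by
    rw [le_div_iff₀ (mul_pos hq hμd_pos)]
    calc d * (‖q‖ * μd) = ‖q‖ * μd * d := by ring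
      _ ≤ δ := key
  -- Step 2: ‖s‖ ≤ d + infDist 0 Sstar + diam Sstar
  have hnorm : ‖s‖ ≤ d + infDist 0 Sstar + diam Sstar := by
    refine le_of_forall_pos_le_add fun ε hε => ?_
    obtain ⟨s₀, hs₀, hlt⟩ := (infDist_lt_iff hSne).1
      (lt_add_of_pos_right (infDist 0 Sstar) hε)
    have h1 : dist s s₀ ≤ d + diam Sstar := dist_le_infDist_add_diam hSbdd hs₀
    have h2 : dist s 0 ≤ dist s s₀ + dist s₀ 0 := dist_triangle _ _ _
    have h3 : dist s (0 : EuclideanSpace ℝ (Fin n)) = ‖s‖ := by simp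
    have h4 : dist s₀ (0 : EuclideanSpace ℝ (Fin n)) = dist 0 s₀ := dist_comm _ _
    linarith
  -- Step 3: ℓ1 via Cauchy–Schwarz
  have hpos : ∀ i, 0 ≤ s i := hFd ▸ hs |>.2
  have habs : ∑ i, |s i| = ∑ i, s i := by
    apply Finset.sum_congr rfl; intro i _; exact abs_of_nonneg (hpos i)
  set u : EuclideanSpace ℝ (Fin n) := WithLp.toLp 2 (fun _ => 1) with hu
  have hinner : ⟪u, s⟫ = ∑ i, s i := by
    simp [hu, PiLp.inner_apply, RCLike.inner_apply]
  have hnu : ‖u‖ = Real.sqrt n := by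
    rw [EuclideanSpace.norm_eq]
    simp [hu]
  have hcs : ∑ i, s i ≤ Real.sqrt n * ‖s‖ := by
    calc ∑ i, s i = ⟪u, s⟫ := hinner.symm
      _ ≤ ‖u‖ * ‖s‖ := real_inner_le_norm u s
      _ = Real.sqrt n * ‖s‖ := by rw [hnu]
  rw [habs]
  calc ∑ i, s i ≤ Real.sqrt n * ‖s‖ := hcs
    _ ≤ Real.sqrt n * (δ / (‖q‖ * μd) + infDist 0 Sstar + diam Sstar) := by
        apply mul_le_mul_of_nonneg_left _ (Real.sqrt_nonneg _)
        linarith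
end

section
/- Suppose the primal LP has a unique optimal solution x*, μ_p > 0, μ_d > 0, S* is nonempty and bounded, and let δ > 0 and let x̄ ∈ F_p satisfy c^T x̄ ≤ f* + δ and min_i x̄_i = r_δ > 0. Then θ_p* ≤ ‖x* − x̄‖ · (√n/δ) · ( δ/(Dist(0, V_p) · μ_d) + Dist(0, S*) + Diam(S*) ). -/
open Metric Set Filter Topology
open scoped RealInnerProductSpace Classical

private lemma aff_nonneg {a b v : ℝ} (h : ∀ t : ℝ, 0 ≤ t → v ≤ a + t * b) : 0 ≤ b := by
  by_contra hb
  push_neg at hb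
  have ha : v ≤ a := by linarith [h 0 le_rfl]
  have ht : 0 ≤ (a - v + 1) / (-b) := div_nonneg (by linarith) (by linarith)
  have h1 := h _ ht
  have h2 : (a - v + 1) / (-b) * b = -(a - v + 1) := by
    rw [div_mul_eq_mul_div, div_neg, mul_div_assoc, div_self hb.ne, mul_one]
  linarith

private lemma aff_zero {a b v : ℝ} (h : ∀ t : ℝ, v ≤ a + t * b) : b = 0 := by
  have h1 : 0 ≤ b := aff_nonneg fun t _ => h t
  have h2 : 0 ≤ -b := by
    apply aff_nonneg (a := a) (v := v)
    intro t _
    have h3 := h (-t)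
    nlinarith [h3]
  linarith

private lemma aff_le {a b a' b' : ℝ} (h : ∀ t : ℝ, 0 ≤ t → a + t * b ≤ a' + t * b') : b ≤ b' := by
  have h1 : 0 ≤ b' - b := by
    apply aff_nonneg (a := a' - a) (v := 0)
    intro t ht
    have := h t ht
    nlinarith [this]
  linarith

private lemma quad_zero {a b : ℝ} (hb : 0 ≤ b) (h : ∀ t : ℝ, 0 ≤ 2*(t*a) + t^2*b) : a = 0 := by
  have key : a ^ 2 ≤ 0 := by
    rcases eq_or_lt_of_le hb with hb0 | hbpos
    · have h1 := h (-a)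
      nlinarith [h1]
    · have h1 := h (-(a/b))
      have hbne : b ≠ 0 := ne_of_gt hbpos
      have e : 2*((-(a/b))*a) + (-(a/b))^2*b = -(a^2/b) := by
        field_simp
        ring
      rw [e] at h1
      have hle : a^2/b ≤ 0 := by linarith
      have h2 : a^2 = a^2/b*b := (div_mul_cancel₀ _ hbne).symm
      have h3 : a^2/b*b ≤ 0 := mul_nonpos_iff.mpr (Or.inr ⟨hle, hbpos.le⟩)
      linarith
  have h2 : a ^ 2 = 0 := le_antisymm key (sq_nonneg a)
  exact pow_eq_zero_iff (by norm_num) |>.mp h2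

private lemma coord_le_norm {n : ℕ} (v : EuclideanSpace ℝ (Fin n)) (i : Fin n) : |v i| ≤ ‖v‖ := by
  have hsum : ‖v i‖^2 ≤ ∑ j, ‖v j‖^2 :=
    Finset.single_le_sum (f := fun j => ‖v j‖^2) (fun j _ => sq_nonneg _) (Finset.mem_univ i)
  calc |v i| = ‖v i‖ := (Real.norm_eq_abs _).symm
    _ = Real.sqrt (‖v i‖^2) := (Real.sqrt_sq (norm_nonneg _)).symm
    _ ≤ Real.sqrt (∑ j, ‖v j‖^2) := Real.sqrt_le_sqrt hsum
    _ = ‖v‖ := (EuclideanSpace.norm_eq v).symm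

private lemma le_infDist_of {α : Type*} [PseudoMetricSpace α] {s : Set α} (hs : s.Nonempty)
    {x : α} {b : ℝ} (h : ∀ y ∈ s, b ≤ dist x y) : b ≤ infDist x s := by
  by_contra hlt
  push_neg at hlt
  obtain ⟨y, hy, hd⟩ := (infDist_lt_iff hs).mp hlt
  exact absurd (h y hy) (by linarith)

set_option maxHeartbeats 4000000 in
/-- inequality \eqref{bound thetax}: if the primal LP has a unique optimal
solution `x*`, `μ_p > 0`, `μ_d > 0`, `S*` is nonempty and bounded, `δ > 0`, and `x̄ ∈ F_p`
satisfies `c^T x̄ ≤ f* + δ` and `min_i x̄_i = r_δ > 0`, then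
`θ_p* ≤ ‖x* − x̄‖ · (√n/δ) · (δ/(Dist(0,V_p)·μ_d) + Dist(0,S*) + Diam(S*))`. -/
theorem limiting_error_ratio_intermediate_bound
    (n : ℕ) (hn : 0 < n)
    (Vp : AffineSubspace ℝ (EuclideanSpace ℝ (Fin n)))
    (c : EuclideanSpace ℝ (Fin n)) (hcdir : c ∈ Vp.direction) (hc0 : c ≠ 0)
    (Fp : Set (EuclideanSpace ℝ (Fin n)))
    (hFp : Fp = {x | x ∈ Vp ∧ ∀ i, 0 ≤ x i})
    (fstar : ℝ)
    (hfstar : IsLeast ((fun x => ⟪c, x⟫) '' Fp) fstar)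
    (Xstar : Set (EuclideanSpace ℝ (Fin n)))
    (hXstar : Xstar = {x ∈ Fp | ⟪c, x⟫ = fstar})
    (xstar : EuclideanSpace ℝ (Fin n)) (hunique : Xstar = {xstar})
    (Vd : Set (EuclideanSpace ℝ (Fin n)))
    (hVd : Vd = {s | s - c ∈ Vp.directionᗮ})
    (Fd : Set (EuclideanSpace ℝ (Fin n)))
    (hFd : Fd = {s | s ∈ Vd ∧ ∀ i, 0 ≤ s i})
    (q : EuclideanSpace ℝ (Fin n)) (hqVp : q ∈ Vp)
    (hqmin : ∀ v ∈ (Vp : Set (EuclideanSpace ℝ (Fin n))), ‖q‖ ≤ ‖v‖) (hq0 : q ≠ 0)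
    (Sstar : Set (EuclideanSpace ℝ (Fin n)))
    (hSstar : Sstar = {s ∈ Fd | ∀ t ∈ Fd, -⟪q, t⟫ ≤ -⟪q, s⟫})
    (hSne : Sstar.Nonempty) (hSbdd : Bornology.IsBounded Sstar)
    (hPnonopt : (Fp \ Xstar).Nonempty)
    (hDnonopt : (Fd \ Sstar).Nonempty)
    (θ : EuclideanSpace ℝ (Fin n) → ℝ)
    (hθ : ∀ x, θ x = if x ∈ Fp then 1
        else infDist x Fp / infDist x {y : EuclideanSpace ℝ (Fin n) | ∀ i, 0 ≤ y i})
    (θp : ℝ)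
    (hθp : Tendsto (fun ε : ℝ => sSup (θ '' {x | x ∈ Vp ∧ infDist x Xstar ≤ ε}))
        (𝓝[>] (0 : ℝ)) (𝓝 θp))
    (μp : ℝ)
    (hμp : μp = sInf ((fun x => (⟪c, x⟫ - fstar) / (‖c‖ * infDist x Xstar)) '' (Fp \ Xstar)))
    (hμp_pos : 0 < μp)
    (μd : ℝ)
    (hμd : μd = sInf ((fun s => (⟪q, s⟫ + fstar) / (‖q‖ * infDist s Sstar)) '' (Fd \ Sstar)))
    (hμd_pos : 0 < μd)
    (δ : ℝ) (hδ : 0 < δ)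
    (xbar : EuclideanSpace ℝ (Fin n)) (hxbarF : xbar ∈ Fp)
    (hxbarobj : ⟪c, xbar⟫ ≤ fstar + δ)
    (hxbar_rδ : IsGreatest {t | ∃ x ∈ Fp, ⟪c, x⟫ ≤ fstar + δ ∧ t = ⨅ i, x i} (⨅ i, xbar i))
    (hrδ_pos : 0 < ⨅ i, xbar i) :
    θp ≤ ‖xstar - xbar‖ * (Real.sqrt n / δ) *
      (δ / (infDist 0 (Vp : Set (EuclideanSpace ℝ (Fin n))) * μd)
        + infDist 0 Sstar + Metric.diam Sstar) := by
  classical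
  haveI : Nonempty (Fin n) := Fin.pos_iff_nonempty.mp hn
  set r : ℝ := ⨅ i, xbar i with hrdef
  clear_value r
  -- basic membership facts
  have hxsX : xstar ∈ Xstar := by rw [hunique]; exact rfl
  have hxsFP : xstar ∈ Fp ∧ ⟪c, xstar⟫ = fstar := by rw [hXstar] at hxsX; exact hxsX
  obtain ⟨hxsF, hxsobj⟩ := hxsFP
  have hxsVp : xstar ∈ Vp := by rw [hFp] at hxsF; exact hxsF.1
  have hxs_nn : ∀ i, 0 ≤ xstar i := by rw [hFp] at hxsF; exact hxsF.2
  have hxbarVp : xbar ∈ Vp := by rw [hFp] at hxbarF; exact hxbarF.1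
  have hxbar_nn : ∀ i, 0 ≤ xbar i := by rw [hFp] at hxbarF; exact hxbarF.2
  have hrle : ∀ i, r ≤ xbar i := by
    intro i
    rw [hrdef]
    exact ciInf_le (Finite.bddBelow_range _) i
  have hNq : (0:ℝ) < ‖q‖ := norm_pos_iff.mpr hq0
  have hcpos : (0:ℝ) < ‖c‖ := norm_pos_iff.mpr hc0
  have hsq : (0:ℝ) < Real.sqrt n := Real.sqrt_pos.mpr (by exact_mod_cast hn)
  -- q is orthogonal to the direction of Vp
  have hqperp : ∀ d ∈ Vp.direction, ⟪q, d⟫ = 0 := by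
    intro d hd
    refine quad_zero (sq_nonneg ‖d‖) ?_
    intro t
    have hmem : t • d + q ∈ Vp := by
      have := AffineSubspace.vadd_mem_of_mem_direction (Vp.direction.smul_mem t hd) hqVp
      simpa [vadd_eq_add] using this
    have h1 : ‖q‖ ≤ ‖q + t • d‖ := by
      have := hqmin _ hmem
      rwa [add_comm] at this
    have h2 : ‖q + t • d‖^2 = ‖q‖^2 + 2*(t*⟪q,d⟫) + t^2*‖d‖^2 := by
      rw [norm_add_sq_real, real_inner_smul_right, norm_smul, Real.norm_eq_abs, mul_pow, sq_abs]
    have h3 : ‖q‖^2 ≤ ‖q + t • d‖^2 := pow_le_pow_left₀ (norm_nonneg q) h1 2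
    linarith [h2, h3]
  have hqc : ⟪c, q⟫ = 0 := by rw [real_inner_comm]; exact hqperp c hcdir
  -- key primal-dual inner product identity
  have hid : ∀ x ∈ (Vp : Set (EuclideanSpace ℝ (Fin n))), ∀ s ∈ Vd,
      ⟪s, x⟫ = ⟪c, x⟫ + ⟪q, s⟫ := by
    intro x hx s hs
    rw [hVd] at hs
    have hxq : x - q ∈ Vp.direction := by
      have := AffineSubspace.vsub_mem_direction hx hqVp
      simpa [vsub_eq_sub] using this
    have h1 : ⟪x - q, s - c⟫ = 0 := (Vp.direction.mem_orthogonal (s - c)).mp hs _ hxq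
    have h2 : ⟪q, c⟫ = 0 := hqperp c hcdir
    have e : ⟪x - q, s - c⟫ = ⟪x, s⟫ - ⟪x, c⟫ - ⟪q, s⟫ + ⟪q, c⟫ := by
      simp only [inner_sub_left, inner_sub_right]
      ring
    have e2 : ⟪s, x⟫ = ⟪x, s⟫ := real_inner_comm x s
    have e3 : ⟪c, x⟫ = ⟪x, c⟫ := real_inner_comm x c
    linarith [h1, e, e2, e3, h2]
  -- weak duality: the duality gap is nonnegative
  have hgap : ∀ s ∈ Fd, 0 ≤ ⟪q, s⟫ + fstar := by
    intro s hs
    rw [hFd] at hs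
    have h1 : ⟪s, xstar⟫ = ⟪c, xstar⟫ + ⟪q, s⟫ := hid xstar hxsVp s hs.1
    have h2 : 0 ≤ ⟪s, xstar⟫ := by
      have e : ⟪s, xstar⟫ = ∑ i, s i * xstar i := by
        simp [PiLp.inner_apply, RCLike.inner_apply, conj_trivial]
        exact Finset.sum_congr rfl fun i _ => mul_comm _ _
      rw [e]
      exact Finset.sum_nonneg fun i _ => mul_nonneg (hs.2 i) (hxs_nn i)
    rw [hxsobj] at h1
    linarith
  -- closedness facts
  have hVdclosed : IsClosed Vd := by
    rw [hVd]
    have he : {s : EuclideanSpace ℝ (Fin n) | s - c ∈ Vp.directionᗮ}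
        = (fun s => s - c) ⁻¹' ((Vp.directionᗮ : Submodule ℝ (EuclideanSpace ℝ (Fin n))) : Set (EuclideanSpace ℝ (Fin n))) := rfl
    rw [he]
    exact (Submodule.closed_of_finiteDimensional _).preimage (continuous_id.sub continuous_const)
  have horthclosed : IsClosed {y : EuclideanSpace ℝ (Fin n) | ∀ i, 0 ≤ y i} := by
    have he : {y : EuclideanSpace ℝ (Fin n) | ∀ i, 0 ≤ y i}
        = ⋂ i, (EuclideanSpace.proj (𝕜 := ℝ) i) ⁻¹' (Ici 0) := by
      ext y
      simp [EuclideanSpace.proj, PiLp.proj_apply]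
    rw [he]
    exact isClosed_iInter fun i => isClosed_Ici.preimage (EuclideanSpace.proj i).continuous
  have hFdclosed : IsClosed Fd := by
    rw [hFd]
    exact IsClosed.inter hVdclosed horthclosed
  have hSsub : Sstar ⊆ Fd := by rw [hSstar]; exact fun s hs => hs.1
  have hSclosed : IsClosed Sstar := by
    rw [hSstar]
    have he : {s | s ∈ Fd ∧ ∀ t ∈ Fd, -⟪q, t⟫ ≤ -⟪q, s⟫}
        = Fd ∩ ⋂ t ∈ Fd, {s : EuclideanSpace ℝ (Fin n) | -⟪q, t⟫ ≤ -⟪q, s⟫} := by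
      ext s
      simp [mem_iInter]
    rw [he]
    refine hFdclosed.inter (isClosed_biInter fun t ht => ?_)
    have he2 : {s : EuclideanSpace ℝ (Fin n) | -⟪q, t⟫ ≤ -⟪q, s⟫}
        = (fun s : EuclideanSpace ℝ (Fin n) => -⟪q, s⟫) ⁻¹' (Ici (-⟪q, t⟫)) := rfl
    rw [he2]
    exact isClosed_Ici.preimage ((continuous_const.inner continuous_id).neg)
  have hScompact : IsCompact Sstar := isCompact_iff_isClosed_bounded.mpr ⟨hSclosed, hSbdd⟩
  set dS : ℝ := infDist 0 Sstar + Metric.diam Sstar with hdS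
  clear_value dS
  have hdSnn : 0 ≤ dS := by
    rw [hdS]
    exact add_nonneg infDist_nonneg diam_nonneg
  -- dual sharpness bound
  have hsharp : ∀ s ∈ Fd, infDist s Sstar ≤ (⟪q, s⟫ + fstar) / (‖q‖ * μd) := by
    intro s hs
    have hrhs0 : ∀ u ∈ ((fun s => (⟪q, s⟫ + fstar) / (‖q‖ * infDist s Sstar)) '' (Fd \ Sstar)), (0:ℝ) ≤ u := by
      rintro u ⟨t, ht, rfl⟩
      exact div_nonneg (hgap t ht.1) (mul_nonneg (norm_nonneg q) infDist_nonneg)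
    by_cases hsS : s ∈ Sstar
    · rw [infDist_zero_of_mem hsS]
      exact div_nonneg (hgap s hs) (mul_nonneg (norm_nonneg q) (le_of_lt hμd_pos))
    · have hmem : (⟪q, s⟫ + fstar) / (‖q‖ * infDist s Sstar)
          ∈ ((fun s => (⟪q, s⟫ + fstar) / (‖q‖ * infDist s Sstar)) '' (Fd \ Sstar)) :=
        ⟨s, ⟨hs, hsS⟩, rfl⟩
      have h1 : μd ≤ (⟪q, s⟫ + fstar) / (‖q‖ * infDist s Sstar) := by
        rw [hμd]
        exact csInf_le ⟨0, hrhs0⟩ hmem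
      rcases eq_or_lt_of_le (infDist_nonneg (s := Sstar) (x := s)) with h0 | hpos
      · rw [← h0]
        exact div_nonneg (hgap s hs) (mul_nonneg (norm_nonneg q) hμd_pos.le)
      · have h2 : μd * (‖q‖ * infDist s Sstar) ≤ ⟪q, s⟫ + fstar :=
          (le_div_iff₀ (by positivity)).mp h1
        rw [le_div_iff₀ (by positivity)]
        nlinarith [h2]
  -- norm bound over the dual feasible region
  have hD0 : ∀ s : EuclideanSpace ℝ (Fin n), ‖s‖ ≤ infDist s Sstar + dS := by
    intro s
    obtain ⟨s0, hs0, hds0⟩ := hScompact.exists_infDist_eq_dist hSne s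
    obtain ⟨s1, hs1, hds1⟩ := hScompact.exists_infDist_eq_dist hSne (0 : EuclideanSpace ℝ (Fin n))
    have h4 : dist s (0 : EuclideanSpace ℝ (Fin n)) ≤ dist s s0 + dist s0 s1 + dist s1 0 :=
      dist_triangle4 s s0 s1 0
    have h5 : dist s0 s1 ≤ diam Sstar := dist_le_diam_of_mem hSbdd hs0 hs1
    have h6 : dist s1 (0 : EuclideanSpace ℝ (Fin n)) = infDist 0 Sstar := by
      rw [dist_comm]; exact hds1.symm
    have h7 : dist s (0 : EuclideanSpace ℝ (Fin n)) = ‖s‖ := dist_zero_right s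
    rw [hdS]
    linarith [h4, h5, h6, h7, hds0]
  -- the all-ones vector
  set ones : EuclideanSpace ℝ (Fin n) := (WithLp.equiv 2 _).symm (fun _ => (1:ℝ)) with hones
  have hones_apply : ∀ i, ones i = 1 := fun i => rfl
  have honesnorm : ‖ones‖ = Real.sqrt n := by
    rw [EuclideanSpace.norm_eq]
    simp [hones_apply]
  have hinner_ones : ∀ v : EuclideanSpace ℝ (Fin n), ⟪ones, v⟫ = ∑ i, v i := by
    intro v
    simp [PiLp.inner_apply, RCLike.inner_apply, conj_trivial, hones_apply]
  have hkey : ∀ s ∈ Fd, ⟪ones, s⟫ ≤ Real.sqrt n * ((⟪q, s⟫ + fstar) / (‖q‖ * μd) + dS) := by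
    intro s hs
    have h1 : ⟪ones, s⟫ ≤ Real.sqrt n * ‖s‖ := by
      have := real_inner_le_norm ones s
      rwa [honesnorm] at this
    have h2 : ‖s‖ ≤ (⟪q, s⟫ + fstar) / (‖q‖ * μd) + dS :=
      le_trans (hD0 s) (by linarith [hsharp s hs])
    calc ⟪ones, s⟫ ≤ Real.sqrt n * ‖s‖ := h1
      _ ≤ _ := mul_le_mul_of_nonneg_left h2 (Real.sqrt_nonneg n)
  -- trivial recession cone
  have hcone : ∀ d : EuclideanSpace ℝ (Fin n), d ∈ Vp.direction →
      (∀ i, 0 ≤ d i) → ⟪c, d⟫ ≤ 0 → d = 0 := by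
    intro d hd hdnn hdc
    have hmem : d + xstar ∈ Vp := by
      have := AffineSubspace.vadd_mem_of_mem_direction hd hxsVp
      simpa [vadd_eq_add] using this
    have hFmem : d + xstar ∈ Fp := by
      rw [hFp]
      refine ⟨hmem, fun i => ?_⟩
      have h1 := hdnn i
      have h2 := hxs_nn i
      have h3 : (d + xstar) i = d i + xstar i := rfl
      rw [h3]; linarith
    have hobj : ⟪c, d + xstar⟫ = ⟪c, d⟫ + fstar := by rw [inner_add_right, hxsobj]
    have hlow : fstar ≤ ⟪c, d + xstar⟫ := hfstar.2 ⟨_, hFmem, rfl⟩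
    have hXmem : d + xstar ∈ Xstar := by
      rw [hXstar]
      exact ⟨hFmem, by linarith⟩
    rw [hunique, mem_singleton_iff] at hXmem
    exact add_eq_right.mp hXmem
  -- boundedness of sublevel slices
  have hbdd : ∀ C M : ℝ, ∃ R : ℝ, ∀ x : EuclideanSpace ℝ (Fin n),
      x ∈ Vp → (∀ i, -C ≤ x i) → ⟪c, x⟫ ≤ M → ‖x‖ ≤ R := by
    intro C M
    by_contra hcon
    push_neg at hcon
    choose X hX1 hX2 hX3 hX4 using hcon
    set Y : ℕ → EuclideanSpace ℝ (Fin n) := fun k => X (k : ℝ) with hY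
    have hYgt : ∀ k : ℕ, (k:ℝ) < ‖Y k‖ := fun k => hX4 (k : ℝ)
    have hYpos : ∀ k, (0:ℝ) < ‖Y k‖ := fun k => lt_of_le_of_lt (Nat.cast_nonneg k) (hYgt k)
    set u : ℕ → EuclideanSpace ℝ (Fin n) := fun k => (‖Y k‖)⁻¹ • Y k with hu
    have husph : ∀ k, u k ∈ sphere (0 : EuclideanSpace ℝ (Fin n)) 1 := by
      intro k
      rw [mem_sphere_zero_iff_norm, hu]
      simp only [norm_smul, norm_inv, norm_norm]
      exact inv_mul_cancel₀ (ne_of_gt (hYpos k))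
    obtain ⟨d, hdsph, φ, hφ, hconv⟩ :=
      (isCompact_sphere (0 : EuclideanSpace ℝ (Fin n)) 1).tendsto_subseq husph
    have hnormtop : Tendsto (fun k => ‖Y (φ k)‖) atTop atTop := by
      apply tendsto_atTop_mono (fun k => ?_) tendsto_natCast_atTop_atTop
      exact le_of_lt (lt_of_le_of_lt (Nat.cast_le.mpr hφ.le_apply) (hYgt (φ k)))
    have hinv0 : Tendsto (fun k => (‖Y (φ k)‖)⁻¹) atTop (𝓝 0) := hnormtop.inv_tendsto_atTop
    have hconv' : Tendsto (fun k => u (φ k)) atTop (𝓝 d) := hconv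
    have hdir : d ∈ Vp.direction := by
      have hmem : ∀ k, u (φ k) - (‖Y (φ k)‖)⁻¹ • xstar ∈ Vp.direction := by
        intro k
        have h1 : Y (φ k) - xstar ∈ Vp.direction := by
          have := AffineSubspace.vsub_mem_direction (hX1 ((φ k : ℕ) : ℝ)) hxsVp
          simpa [vsub_eq_sub] using this
        have := Vp.direction.smul_mem (‖Y (φ k)‖)⁻¹ h1
        simpa [hu, smul_sub] using this
      have htend : Tendsto (fun k => u (φ k) - (‖Y (φ k)‖)⁻¹ • xstar) atTop
          (𝓝 (d - (0:ℝ) • xstar)) := hconv'.sub (hinv0.smul_const xstar)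
      rw [zero_smul, sub_zero] at htend
      exact (Submodule.closed_of_finiteDimensional _).mem_of_tendsto htend
        (Filter.Eventually.of_forall hmem)
    have hdnn : ∀ i, 0 ≤ d i := by
      intro i
      have hcoord : Tendsto (fun k => u (φ k) i) atTop (𝓝 (d i)) := by
        have := ((EuclideanSpace.proj (𝕜 := ℝ) i).continuous.tendsto d).comp hconv'
        exact this
      have hlow : ∀ k, -C * (‖Y (φ k)‖)⁻¹ ≤ u (φ k) i := by
        intro k
        have h1 : -C ≤ Y (φ k) i := hX2 _ i
        have h2 : (0:ℝ) ≤ (‖Y (φ k)‖)⁻¹ := inv_nonneg.mpr (norm_nonneg _)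
        have h3 : (‖Y (φ k)‖)⁻¹ * (-C) ≤ (‖Y (φ k)‖)⁻¹ * Y (φ k) i :=
          mul_le_mul_of_nonneg_left h1 h2
        have h4 : u (φ k) i = (‖Y (φ k)‖)⁻¹ * Y (φ k) i := rfl
        rw [h4]
        linarith
      have htend2 : Tendsto (fun k => -C * (‖Y (φ k)‖)⁻¹) atTop (𝓝 0) := by
        have := hinv0.const_mul (-C)
        simpa using this
      exact le_of_tendsto_of_tendsto' htend2 hcoord hlow
    have hdc : ⟪c, d⟫ ≤ 0 := by
      have hctend : Tendsto (fun k => ⟪c, u (φ k)⟫) atTop (𝓝 ⟪c, d⟫) :=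
        Filter.Tendsto.inner tendsto_const_nhds hconv'
      have hub : ∀ k, ⟪c, u (φ k)⟫ ≤ M * (‖Y (φ k)‖)⁻¹ := by
        intro k
        have h2 : (0:ℝ) ≤ (‖Y (φ k)‖)⁻¹ := inv_nonneg.mpr (norm_nonneg _)
        have h3 : (‖Y (φ k)‖)⁻¹ * ⟪c, Y (φ k)⟫ ≤ (‖Y (φ k)‖)⁻¹ * M :=
          mul_le_mul_of_nonneg_left (hX3 _) h2
        have h4 : ⟪c, u (φ k)⟫ = (‖Y (φ k)‖)⁻¹ * ⟪c, Y (φ k)⟫ := by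
          rw [hu]
          exact real_inner_smul_right _ _ _
        rw [h4]
        linarith
      have htend3 : Tendsto (fun k => M * (‖Y (φ k)‖)⁻¹) atTop (𝓝 0) := by
        have := hinv0.const_mul M
        simpa using this
      exact le_of_tendsto_of_tendsto' hctend htend3 hub
    have hd0 : d = 0 := hcone d hdir hdnn hdc
    rw [mem_sphere_zero_iff_norm, hd0, norm_zero] at hdsph
    exact absurd hdsph (by norm_num)
  set Bq : ℝ := δ / (‖q‖ * μd) + dS with hBq
  clear_value Bq
  have hBqpos : 0 < Bq := by
    rw [hBq]
    have : 0 < δ / (‖q‖ * μd) := div_pos hδ (by positivity)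
    linarith
  -- MAIN QUANTITATIVE CLAIM : δ ≤ r * (√n * Bq)
  have hmain : δ ≤ r * (Real.sqrt n * Bq) := by
    by_contra hlt
    push_neg at hlt
    set ρ : ℝ := δ / (Real.sqrt n * Bq) with hρ
    clear_value ρ
    have hρpos : 0 < ρ := by
      rw [hρ]
      exact div_pos hδ (mul_pos hsq hBqpos)
    have hrρ : r < ρ := by
      rw [hρ, lt_div_iff₀ (mul_pos hsq hBqpos)]
      exact hlt
    set ρ' : ℝ := (r + ρ) / 2 with hρ'
    clear_value ρ'
    have hρ'1 : r < ρ' := by rw [hρ']; linarith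
    have hρ'2 : ρ' < ρ := by rw [hρ']; linarith
    have hρ'pos : 0 < ρ' := by rw [hρ']; linarith [hrδ_pos]
    set Q : Set (EuclideanSpace ℝ (Fin n)) := {y | ∀ i, ρ' ≤ y i} with hQdef
    have hdisj : ∀ x : EuclideanSpace ℝ (Fin n), x ∈ Vp → ⟪c, x⟫ ≤ fstar + δ → x ∉ Q := by
      intro x hx hobj hge
      rw [hQdef] at hge
      have hxF : x ∈ Fp := by
        rw [hFp]
        exact ⟨hx, fun i => le_trans hρ'pos.le (hge i)⟩
      have h1 : (⨅ i, x i) ≤ r := hxbar_rδ.2 ⟨x, hxF, hobj, rfl⟩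
      have h2 : ρ' ≤ ⨅ i, x i := le_ciInf hge
      linarith
    have hQclosed : IsClosed Q := by
      have he : Q = ⋂ i, (EuclideanSpace.proj (𝕜 := ℝ) i) ⁻¹' (Ici ρ') := by
        rw [hQdef]
        ext y
        simp [EuclideanSpace.proj, PiLp.proj_apply, mem_iInter]
      rw [he]
      exact isClosed_iInter fun i => isClosed_Ici.preimage (EuclideanSpace.proj i).continuous
    have hQconv : Convex ℝ Q := by
      rintro y1 hy1 y2 hy2 a b ha hb hab
      rw [hQdef] at hy1 hy2 ⊢
      intro i
      have h1 : (a • y1 + b • y2) i = a * y1 i + b * y2 i := rfl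
      have h2 : a * ρ' ≤ a * y1 i := mul_le_mul_of_nonneg_left (hy1 i) ha
      have h3 : b * ρ' ≤ b * y2 i := mul_le_mul_of_nonneg_left (hy2 i) hb
      have h4 : a * ρ' + b * ρ' = ρ' := by rw [← add_mul, hab, one_mul]
      rw [h1]
      linarith
    set D : Set ((EuclideanSpace ℝ (Fin n)) × ℝ) :=
      {p | ∃ x ∈ (Vp : Set (EuclideanSpace ℝ (Fin n))), ∃ y ∈ Q, ∃ uu : ℝ, 0 ≤ uu ∧
        p = (x - y, ⟪c, x⟫ + uu - (fstar + δ))} with hDdef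
    have hDconv : Convex ℝ D := by
      rintro p1 ⟨x1, hx1, y1, hy1, u1, hu1, rfl⟩ p2 ⟨x2, hx2, y2, hy2, u2, hu2, rfl⟩ a b ha hb hab
      refine ⟨a • x1 + b • x2, Vp.convex hx1 hx2 ha hb hab,
        a • y1 + b • y2, hQconv hy1 hy2 ha hb hab,
        a * u1 + b * u2, add_nonneg (mul_nonneg ha hu1) (mul_nonneg hb hu2), ?_⟩
      have e1 : a • (x1 - y1) + b • (x2 - y2)
          = (a • x1 + b • x2) - (a • y1 + b • y2) := by
        rw [smul_sub, smul_sub]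
        abel
      have e2 : a * (⟪c, x1⟫ + u1 - (fstar + δ)) + b * (⟪c, x2⟫ + u2 - (fstar + δ))
          = ⟪c, a • x1 + b • x2⟫ + (a * u1 + b * u2) - (fstar + δ) := by
        rw [inner_add_right, real_inner_smul_right, real_inner_smul_right]
        linear_combination (-(fstar + δ)) * hab
      have : a • ((x1 - y1, ⟪c, x1⟫ + u1 - (fstar + δ)) : (EuclideanSpace ℝ (Fin n)) × ℝ)
          + b • ((x2 - y2, ⟪c, x2⟫ + u2 - (fstar + δ)) : (EuclideanSpace ℝ (Fin n)) × ℝ)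
          = (a • (x1 - y1) + b • (x2 - y2),
             a * (⟪c, x1⟫ + u1 - (fstar + δ)) + b * (⟪c, x2⟫ + u2 - (fstar + δ))) := rfl
      rw [this, e1, e2]
    have h00 : ((0 : EuclideanSpace ℝ (Fin n)), (0:ℝ)) ∉ D := by
      rintro ⟨x, hx, y, hy, uu, huu, heq⟩
      have h1 : (0 : EuclideanSpace ℝ (Fin n)) = x - y := congrArg Prod.fst heq
      have h2 : (0:ℝ) = ⟪c, x⟫ + uu - (fstar + δ) := congrArg Prod.snd heq
      have hxy : x = y := sub_eq_zero.mp h1.symm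
      have hobj : ⟪c, x⟫ ≤ fstar + δ := by linarith [h2, huu]
      exact hdisj x hx hobj (hxy ▸ hy)
    have hDclosed : IsClosed D := by
      apply IsSeqClosed.isClosed
      intro pseq p hmemseq htend
      choose xs hxs ys hys us hus heq using hmemseq
      have hbr : Bornology.IsBounded (range pseq) := htend.cauchySeq.isBounded_range
      obtain ⟨K, hK⟩ := isBounded_iff_forall_norm_le.mp hbr
      have hKs : ∀ k, ‖pseq k‖ ≤ K := fun k => hK _ ⟨k, rfl⟩
      obtain ⟨R, hR⟩ := hbdd K (K + (fstar + δ))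
      have hxsnorm : ∀ k, ‖xs k‖ ≤ R := by
        intro k
        apply hR _ (hxs k)
        · intro i
          have h1 : (pseq k).1 = xs k - ys k := congrArg Prod.fst (heq k)
          have h2 : xs k i = (pseq k).1 i + ys k i := by
            rw [h1]
            have : (xs k - ys k) i = xs k i - ys k i := rfl
            rw [this]; ring
          have h3 : -K ≤ (pseq k).1 i := by
            have ha := coord_le_norm (pseq k).1 i
            have hb : ‖(pseq k).1‖ ≤ ‖pseq k‖ := norm_fst_le _
            have := abs_le.mp ha
            linarith [this.1, hKs k]
          have h4 : ρ' ≤ ys k i := hys k i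
          rw [h2]
          linarith [hρ'pos]
        · have h1 : (pseq k).2 = ⟪c, xs k⟫ + us k - (fstar + δ) := congrArg Prod.snd (heq k)
          have h2 : |(pseq k).2| ≤ ‖pseq k‖ := by
            have := norm_snd_le (pseq k)
            rwa [Real.norm_eq_abs] at this
          have := abs_le.mp h2
          have h3 := hus k
          linarith [this.2, hKs k]
      obtain ⟨xinf, _, ψ, hψ, hxconv⟩ :=
        (isCompact_closedBall (0 : EuclideanSpace ℝ (Fin n)) R).tendsto_subseq
          (x := xs) (fun k => by simpa [mem_closedBall, dist_zero_right] using hxsnorm k)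
      have hxconv' : Tendsto (fun k => xs (ψ k)) atTop (𝓝 xinf) := hxconv
      have hz : Tendsto (fun k => (pseq (ψ k)).1) atTop (𝓝 p.1) :=
        ((continuous_fst.tendsto p).comp htend).comp hψ.tendsto_atTop
      have hw : Tendsto (fun k => (pseq (ψ k)).2) atTop (𝓝 p.2) :=
        ((continuous_snd.tendsto p).comp htend).comp hψ.tendsto_atTop
      have hyconv : Tendsto (fun k => ys (ψ k)) atTop (𝓝 (xinf - p.1)) := by
        have he : ∀ k, ys (ψ k) = xs (ψ k) - (pseq (ψ k)).1 := by
          intro k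
          have h1 : (pseq (ψ k)).1 = xs (ψ k) - ys (ψ k) := congrArg Prod.fst (heq (ψ k))
          rw [h1]
          abel
        simp_rw [he]
        exact hxconv'.sub hz
      have hcxconv : Tendsto (fun k => ⟪c, xs (ψ k)⟫) atTop (𝓝 ⟪c, xinf⟫) :=
        Filter.Tendsto.inner tendsto_const_nhds hxconv'
      have huconv : Tendsto (fun k => us (ψ k)) atTop (𝓝 (p.2 + (fstar + δ) - ⟪c, xinf⟫)) := by
        have he : ∀ k, us (ψ k) = (pseq (ψ k)).2 + (fstar + δ) - ⟪c, xs (ψ k)⟫ := by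
          intro k
          have h1 : (pseq (ψ k)).2 = ⟪c, xs (ψ k)⟫ + us (ψ k) - (fstar + δ) :=
            congrArg Prod.snd (heq (ψ k))
          rw [h1]; ring
        simp_rw [he]
        exact (hw.add_const (fstar + δ)).sub hcxconv
      have hxinfVp : xinf ∈ Vp := by
        have : IsClosed (Vp : Set (EuclideanSpace ℝ (Fin n))) :=
          AffineSubspace.closed_of_finiteDimensional Vp
        exact this.mem_of_tendsto hxconv' (Filter.Eventually.of_forall fun k => hxs (ψ k))
      have hyinfQ : xinf - p.1 ∈ Q :=
        hQclosed.mem_of_tendsto hyconv (Filter.Eventually.of_forall fun k => hys (ψ k))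
      have huinf : 0 ≤ p.2 + (fstar + δ) - ⟪c, xinf⟫ :=
        le_of_tendsto_of_tendsto' tendsto_const_nhds huconv fun k => hus (ψ k)
      refine ⟨xinf, hxinfVp, xinf - p.1, hyinfQ, p.2 + (fstar + δ) - ⟪c, xinf⟫, huinf, ?_⟩
      have e1 : xinf - (xinf - p.1) = p.1 := by abel
      have e2 : ⟪c, xinf⟫ + (p.2 + (fstar + δ) - ⟪c, xinf⟫) - (fstar + δ) = p.2 := by ring
      rw [e1, e2]
    -- hyperplane separation
    obtain ⟨f, u0, v0, hfu, huv, hfD⟩ :=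
      geometric_hahn_banach_compact_closed (convex_singleton ((0 : EuclideanSpace ℝ (Fin n)), (0:ℝ)))
        isCompact_singleton hDconv hDclosed (disjoint_singleton_left.mpr h00)
    have hf0 : f ((0 : EuclideanSpace ℝ (Fin n)), (0:ℝ)) = 0 := map_zero f
    have hu0pos : (0:ℝ) < u0 := by
      have := hfu _ (mem_singleton _)
      rwa [hf0] at this
    have hv0 : (0:ℝ) < v0 := lt_trans hu0pos huv
    set lam : ℝ := f ((0 : EuclideanSpace ℝ (Fin n)), (1:ℝ)) with hlamdef
    set g : EuclideanSpace ℝ (Fin n) →L[ℝ] ℝ :=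
      f.comp (ContinuousLinearMap.inl ℝ (EuclideanSpace ℝ (Fin n)) ℝ) with hgdef
    set w' : EuclideanSpace ℝ (Fin n) :=
      -((InnerProductSpace.toDual ℝ (EuclideanSpace ℝ (Fin n))).symm g) with hw'def
    have hw'_apply : ∀ z, ⟪w', z⟫ = -(g z) := by
      intro z
      rw [hw'def, inner_neg_left, InnerProductSpace.toDual_symm_apply]
    have hf_eq : ∀ (z : EuclideanSpace ℝ (Fin n)) (w : ℝ), f (z, w) = -⟪w', z⟫ + w * lam := by
      intro z w
      have h1 : ((z, w) : (EuclideanSpace ℝ (Fin n)) × ℝ)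
          = (z, 0) + ((0 : EuclideanSpace ℝ (Fin n)), w) := by simp
      rw [h1, map_add]
      have h2 : f (z, (0:ℝ)) = g z := rfl
      have h3 : ((0 : EuclideanSpace ℝ (Fin n)), w)
          = w • ((0 : EuclideanSpace ℝ (Fin n)), (1:ℝ)) := by simp
      rw [h2, h3, map_smul, hw'_apply, smul_eq_mul]
      ring
    have hmainineq : ∀ x ∈ (Vp : Set (EuclideanSpace ℝ (Fin n))), ∀ y ∈ Q, ∀ uu : ℝ, 0 ≤ uu →
        v0 < -⟪w', x⟫ + ⟪w', y⟫ + (⟪c, x⟫ + uu - (fstar + δ)) * lam := by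
      intro x hx y hy uu huu
      have h1 := hfD _ ⟨x, hx, y, hy, uu, huu, rfl⟩
      have h2 : f (x - y, ⟪c, x⟫ + uu - (fstar + δ))
          = -⟪w', x⟫ + ⟪w', y⟫ + (⟪c, x⟫ + uu - (fstar + δ)) * lam := by
        rw [hf_eq, inner_sub_right]
        ring
      rwa [h2] at h1
    set y0 : EuclideanSpace ℝ (Fin n) := ρ' • ones with hy0def
    have hy0Q : y0 ∈ Q := by
      rw [hQdef]
      intro i
      have : y0 i = ρ' * 1 := by
        rw [hy0def]
        have h1 : (ρ' • ones) i = ρ' * ones i := rfl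
        rw [h1, hones_apply]
      rw [this, mul_one]
    -- lam is nonnegative
    have hlam : 0 ≤ lam := by
      apply aff_nonneg (a := -⟪w', q⟫ + ⟪w', y0⟫ + (⟪c, q⟫ - (fstar + δ)) * lam) (v := v0)
      intro t ht
      have h1 := hmainineq q hqVp y0 hy0Q t ht
      have e : -⟪w', q⟫ + ⟪w', y0⟫ + (⟪c, q⟫ + t - (fstar + δ)) * lam
          = (-⟪w', q⟫ + ⟪w', y0⟫ + (⟪c, q⟫ - (fstar + δ)) * lam) + t * lam := by ring
      linarith [h1, e.symm.le, e.le]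
    -- coordinates of w' are nonnegative
    have hw'nn : ∀ i, 0 ≤ w' i := by
      intro i
      have hQ' : ∀ t : ℝ, 0 ≤ t → y0 + t • EuclideanSpace.single i (1:ℝ) ∈ Q := by
        intro t ht
        rw [hQdef]
        intro j
        have h1 : (y0 + t • EuclideanSpace.single i (1:ℝ)) j
            = ρ' * ones j + t * (EuclideanSpace.single i (1:ℝ)) j := rfl
        rw [h1, hones_apply, EuclideanSpace.single_apply]
        by_cases hji : j = i
        · simp [hji]; linarith
        · simp [hji]
      apply aff_nonneg (a := -⟪w', q⟫ + ⟪w', y0⟫ + (⟪c, q⟫ + 0 - (fstar + δ)) * lam) (v := v0)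
      intro t ht
      have h1 := hmainineq q hqVp _ (hQ' t ht) 0 le_rfl
      have h2 : ⟪w', y0 + t • EuclideanSpace.single i (1:ℝ)⟫ = ⟪w', y0⟫ + t * w' i := by
        have h3 : ⟪w', EuclideanSpace.single i (1:ℝ)⟫ = w' i := by
          simp [PiLp.inner_apply, RCLike.inner_apply, conj_trivial, EuclideanSpace.single_apply]
        rw [inner_add_right, real_inner_smul_right w' (EuclideanSpace.single i (1:ℝ)) t, h3]
      rw [h2] at h1
      linarith [h1]
    -- orthogonality relation for w'
    have horth : ∀ dv ∈ Vp.direction, ⟪w', dv⟫ = lam * ⟪c, dv⟫ := by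
      intro dv hdv
      have h0 : ∀ t : ℝ, v0 ≤ (-⟪w', q⟫ + ⟪w', y0⟫ + (⟪c, q⟫ - (fstar + δ)) * lam)
          + t * (lam * ⟪c, dv⟫ - ⟪w', dv⟫) := by
        intro t
        have hmem : t • dv + q ∈ Vp := by
          have := AffineSubspace.vadd_mem_of_mem_direction (Vp.direction.smul_mem t hdv) hqVp
          simpa [vadd_eq_add] using this
        have h1 := hmainineq _ hmem y0 hy0Q 0 le_rfl
        have h2 : ⟪w', t • dv + q⟫ = t * ⟪w', dv⟫ + ⟪w', q⟫ := by
          rw [inner_add_right, real_inner_smul_right]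
        have h3 : ⟪c, t • dv + q⟫ = t * ⟪c, dv⟫ + ⟪c, q⟫ := by
          rw [inner_add_right, real_inner_smul_right]
        rw [h2, h3] at h1
        nlinarith [h1]
      have := aff_zero h0
      linarith
    -- the base inequality
    have hbase : v0 < -⟪q, w'⟫ + ρ' * ⟪ones, w'⟫ - (fstar + δ) * lam := by
      have h1 := hmainineq q hqVp y0 hy0Q 0 le_rfl
      have h2 : ⟪w', y0⟫ = ρ' * ⟪ones, w'⟫ := by
        rw [hy0def, real_inner_smul_right, real_inner_comm]
      have h3 : ⟪w', q⟫ = ⟪q, w'⟫ := real_inner_comm _ _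
      rw [hqc, h2, h3] at h1
      nlinarith [h1]
    rcases eq_or_lt_of_le hlam with hlam0 | hlampos
    · -- case lam = 0
      have hworth : ∀ dv ∈ Vp.direction, ⟪w', dv⟫ = 0 := by
        intro dv hdv
        rw [horth dv hdv, ← hlam0, zero_mul]
      have hw'perp : w' ∈ Vp.directionᗮ := by
        rw [Submodule.mem_orthogonal]
        intro dv hdv
        rw [real_inner_comm]
        exact hworth dv hdv
      obtain ⟨sopt, hsoptS⟩ := hSne
      have hsoptFd : sopt ∈ Fd := hSsub hsoptS
      have hsFd : ∀ t : ℝ, 0 ≤ t → sopt + t • w' ∈ Fd := by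
        intro t ht
        rw [hFd] at hsoptFd ⊢
        obtain ⟨hs1, hs2⟩ := hsoptFd
        constructor
        · rw [hVd] at hs1 ⊢
          have he : sopt + t • w' - c = (sopt - c) + t • w' := by abel
          rw [mem_setOf_eq, he]
          exact Submodule.add_mem _ hs1 (Submodule.smul_mem _ t hw'perp)
        · intro i
          have h1 := hw'nn i
          have h2 : (sopt + t • w') i = sopt i + t * w' i := rfl
          rw [h2]
          have := hs2 i
          nlinarith [mul_nonneg ht h1]
      have hqw : 0 ≤ ⟪q, w'⟫ := by
        apply aff_nonneg (a := ⟪q, sopt⟫ + fstar) (v := 0)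
        intro t ht
        have h1 := hgap _ (hsFd t ht)
        have e : ⟪q, sopt + t • w'⟫ = ⟪q, sopt⟫ + t * ⟪q, w'⟫ := by
          rw [inner_add_right, real_inner_smul_right]
        rw [e] at h1
        linarith
      have hν : (0:ℝ) < ‖q‖ * μd := by positivity
      have hν0 : ‖q‖ * μd ≠ 0 := ne_of_gt hν
      have hcomp : ⟪ones, w'⟫ ≤ Real.sqrt n * (⟪q, w'⟫ / (‖q‖ * μd)) := by
        apply aff_le (a := ⟪ones, sopt⟫)
          (a' := Real.sqrt n * ((⟪q, sopt⟫ + fstar) / (‖q‖ * μd) + dS))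
        intro t ht
        have h1 := hkey _ (hsFd t ht)
        have e1 : ⟪ones, sopt + t • w'⟫ = ⟪ones, sopt⟫ + t * ⟪ones, w'⟫ := by
          rw [inner_add_right, real_inner_smul_right]
        have e2 : Real.sqrt n * ((⟪q, sopt + t • w'⟫ + fstar) / (‖q‖ * μd) + dS)
            = Real.sqrt n * ((⟪q, sopt⟫ + fstar) / (‖q‖ * μd) + dS)
              + t * (Real.sqrt n * (⟪q, w'⟫ / (‖q‖ * μd))) := by
          rw [inner_add_right, real_inner_smul_right]
          field_simp
          ring
        rw [e1, e2] at h1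
        exact h1
      have hbase0 : v0 + ⟪q, w'⟫ < ρ' * ⟪ones, w'⟫ := by
        have h1 := hbase
        rw [← hlam0, mul_zero, sub_zero] at h1
        linarith
      have hSumpos : 0 < ⟪ones, w'⟫ := by
        by_contra hc0'
        push_neg at hc0'
        have : ρ' * ⟪ones, w'⟫ ≤ 0 := mul_nonpos_iff.mpr (Or.inl ⟨hρ'pos.le, hc0'⟩)
        linarith
      have hstep1 : ⟪ones, w'⟫ * (‖q‖ * μd) ≤ Real.sqrt n * ⟪q, w'⟫ := by
        have h1 := mul_le_mul_of_nonneg_right hcomp hν.le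
        have e : Real.sqrt n * (⟪q, w'⟫ / (‖q‖ * μd)) * (‖q‖ * μd) = Real.sqrt n * ⟪q, w'⟫ := by
          field_simp
        linarith [h1, e.le, e.ge]
      have hstep2 : Real.sqrt n * (v0 + ⟪q, w'⟫) < Real.sqrt n * (ρ' * ⟪ones, w'⟫) :=
        mul_lt_mul_of_pos_left hbase0 hsq
      have hfinal : ‖q‖ * μd < Real.sqrt n * ρ' := by
        by_contra hge
        push_neg at hge
        have h1 : Real.sqrt n * ρ' * ⟪ones, w'⟫ ≤ (‖q‖ * μd) * ⟪ones, w'⟫ :=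
          mul_le_mul_of_nonneg_right hge hSumpos.le
        nlinarith [hstep1, hstep2, mul_pos hsq hv0]
      have hρν : Real.sqrt n * ρ ≤ ‖q‖ * μd := by
        have e1 : Real.sqrt n * ρ = δ / Bq := by
          rw [hρ, mul_div_assoc', mul_div_mul_left _ _ (ne_of_gt hsq)]
        have e2 : δ / (‖q‖ * μd) ≤ Bq := by rw [hBq]; linarith
        have e3 : δ / Bq ≤ δ / (δ / (‖q‖ * μd)) :=
          div_le_div_of_nonneg_left hδ.le (div_pos hδ hν) e2
        have e4 : δ / (δ / (‖q‖ * μd)) = ‖q‖ * μd := by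
          rw [div_div_eq_mul_div, mul_comm, mul_div_assoc, div_self (ne_of_gt hδ), mul_one]
        rw [e1]
        rw [e4] at e3
        exact e3
      have : Real.sqrt n * ρ' < Real.sqrt n * ρ := mul_lt_mul_of_pos_left hρ'2 hsq
      linarith
    · -- case lam > 0
      have hlamne : lam ≠ 0 := ne_of_gt hlampos
      set σ : EuclideanSpace ℝ (Fin n) := lam⁻¹ • w' with hσdef
      have hσnn : ∀ i, 0 ≤ σ i := by
        intro i
        have h1 := hw'nn i
        have h2 : σ i = lam⁻¹ * w' i := rfl
        rw [h2]
        exact mul_nonneg (inv_nonneg.mpr hlampos.le) h1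
      have hσVd : σ ∈ Vd := by
        rw [hVd, mem_setOf_eq, Submodule.mem_orthogonal]
        intro dv hdv
        have h1 : ⟪σ - c, dv⟫ = lam⁻¹ * ⟪w', dv⟫ - ⟪c, dv⟫ := by
          rw [inner_sub_left, hσdef, real_inner_smul_left]
        have h2 : ⟪dv, σ - c⟫ = ⟪σ - c, dv⟫ := real_inner_comm _ _
        rw [h2, h1, horth dv hdv]
        field_simp
        ring
      have hσFd : σ ∈ Fd := by
        rw [hFd]
        exact ⟨hσVd, hσnn⟩
      have hG := hgap σ hσFd
      have hqσ : ⟪q, σ⟫ = lam⁻¹ * ⟪q, w'⟫ := by rw [hσdef, real_inner_smul_right]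
      have hoσ : ⟪ones, σ⟫ = lam⁻¹ * ⟪ones, w'⟫ := by rw [hσdef, real_inner_smul_right]
      have hstep : δ + (⟪q, σ⟫ + fstar) < ρ' * ⟪ones, σ⟫ := by
        have h1 : v0 * lam⁻¹ < (-⟪q, w'⟫ + ρ' * ⟪ones, w'⟫ - (fstar + δ) * lam) * lam⁻¹ :=
          mul_lt_mul_of_pos_right hbase (inv_pos.mpr hlampos)
        have h2 : (0:ℝ) < v0 * lam⁻¹ := mul_pos hv0 (inv_pos.mpr hlampos)
        have e : (-⟪q, w'⟫ + ρ' * ⟪ones, w'⟫ - (fstar + δ) * lam) * lam⁻¹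
            = -(lam⁻¹ * ⟪q, w'⟫) + ρ' * (lam⁻¹ * ⟪ones, w'⟫) - (fstar + δ) := by
          field_simp
        rw [e] at h1
        rw [hqσ, hoσ]
        linarith
      have hk := hkey σ hσFd
      set G : ℝ := ⟪q, σ⟫ + fstar with hGdef
      clear_value G
      set T : ℝ := G / (‖q‖ * μd) + dS with hT
      clear_value T
      have hTnn : 0 ≤ T := by
        rw [hT]
        have : 0 ≤ G / (‖q‖ * μd) := div_nonneg hG (by positivity)
        linarith
      have hTpos : 0 < T := by
        rcases eq_or_lt_of_le hTnn with h0 | hp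
        · exfalso
          have h1 : ⟪ones, σ⟫ ≤ 0 := by
            have h2 := hk
            rw [← h0, mul_zero] at h2
            linarith
          have h2 : ρ' * ⟪ones, σ⟫ ≤ 0 := mul_nonpos_iff.mpr (Or.inl ⟨hρ'pos.le, h1⟩)
          linarith [hstep, hG, hδ]
        · exact hp
      have hρval : ρ * (Real.sqrt n * Bq) = δ := by
        rw [hρ]
        exact div_mul_cancel₀ δ (by positivity : (0:ℝ) < Real.sqrt n * Bq).ne'
      have hdT : δ * T ≤ (δ + G) * Bq := by
        rw [hT, hBq]
        have e : (δ + G) * (δ / (‖q‖ * μd) + dS) - δ * (G / (‖q‖ * μd) + dS)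
            = δ * δ / (‖q‖ * μd) + G * dS := by ring
        have h1 : 0 ≤ δ * δ / (‖q‖ * μd) := by positivity
        have h2 : 0 ≤ G * dS := mul_nonneg hG hdSnn
        linarith [e, h1, h2]
      have hfinal : ρ * (Real.sqrt n * T) ≤ δ + G := by
        have h1 : ρ * (Real.sqrt n * T) * Bq = δ * T := by
          have e : ρ * (Real.sqrt n * T) * Bq = ρ * (Real.sqrt n * Bq) * T := by ring
          rw [e, hρval]
        have h2 : ρ * (Real.sqrt n * T) * Bq ≤ (δ + G) * Bq := by
          rw [h1]
          exact hdT
        exact le_of_mul_le_mul_right h2 hBqpos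
      have hchain : δ + G < ρ * (Real.sqrt n * T) := by
        calc δ + G < ρ' * ⟪ones, σ⟫ := hstep
          _ ≤ ρ' * (Real.sqrt n * T) := mul_le_mul_of_nonneg_left hk hρ'pos.le
          _ < ρ * (Real.sqrt n * T) := mul_lt_mul_of_pos_right hρ'2 (by positivity)
      linarith
  -- PART A : θp ≤ ‖xbar - xstar‖ / r
  have hzero : ∃ j, xstar j = 0 := by
    by_contra hno
    push_neg at hno
    have hpos : ∀ j, 0 < xstar j := fun j => (hxs_nn j).lt_of_ne (Ne.symm (hno j))
    obtain ⟨j0, _, hj0⟩ := Finset.exists_mem_eq_inf' (Finset.univ_nonempty (α := Fin n))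
      (fun j => xstar j)
    set m0 : ℝ := Finset.univ.inf' Finset.univ_nonempty (fun j => xstar j) with hm0
    clear_value m0
    have hm0pos : 0 < m0 := by rw [hj0]; exact hpos j0
    have hm0le : ∀ j, m0 ≤ xstar j := fun j => by
      rw [hm0]; exact Finset.inf'_le _ (Finset.mem_univ j)
    set t0 : ℝ := m0 / (‖c‖ + 1) with ht0
    clear_value t0
    have ht0pos : 0 < t0 := by
      rw [ht0]; exact div_pos hm0pos (by linarith)
    have hx' : xstar - t0 • c ∈ Vp := by
      have := AffineSubspace.vadd_mem_of_mem_direction (Vp.direction.smul_mem (-t0) hcdir) hxsVp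
      have he : (-t0) • c +ᵥ xstar = xstar - t0 • c := by
        rw [vadd_eq_add, neg_smul]
        abel
      rwa [he] at this
    have hx'nn : ∀ i, 0 ≤ (xstar - t0 • c) i := by
      intro i
      have h1 : (xstar - t0 • c) i = xstar i - t0 * c i := rfl
      rw [h1]
      have h2 : |c i| ≤ ‖c‖ := coord_le_norm c i
      have h3 : t0 * c i ≤ t0 * ‖c‖ := by
        apply mul_le_mul_of_nonneg_left _ ht0pos.le
        exact le_trans (le_abs_self _) h2
      have h4 : t0 * ‖c‖ < m0 := by
        rw [ht0]
        rw [div_mul_eq_mul_div, div_lt_iff₀ (by linarith : (0:ℝ) < ‖c‖ + 1)]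
        nlinarith [hm0pos]
      linarith [hm0le i]
    have hx'F : xstar - t0 • c ∈ Fp := by
      rw [hFp]
      exact ⟨hx', hx'nn⟩
    have hobj : ⟪c, xstar - t0 • c⟫ = fstar - t0 * ‖c‖^2 := by
      rw [inner_sub_right, real_inner_smul_right, hxsobj, real_inner_self_eq_norm_sq]
    have hlow : fstar ≤ ⟪c, xstar - t0 • c⟫ := hfstar.2 ⟨_, hx'F, rfl⟩
    nlinarith [hlow, hobj, ht0pos, hcpos, mul_pos ht0pos (pow_pos hcpos 2)]
  obtain ⟨j, hj⟩ := hzero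
  have hnormge : r ≤ ‖xbar - xstar‖ := by
    have h1 : |(xbar - xstar) j| ≤ ‖xbar - xstar‖ := coord_le_norm _ j
    have h2 : (xbar - xstar) j = xbar j - xstar j := rfl
    rw [h2, hj, sub_zero] at h1
    have h3 := abs_of_nonneg (hxbar_nn j)
    rw [h3] at h1
    exact le_trans (hrle j) h1
  have hsupbound : ∀ ε : ℝ, 0 < ε →
      sSup (θ '' {x | x ∈ Vp ∧ infDist x Xstar ≤ ε}) ≤ (‖xbar - xstar‖ + ε) / r := by
    intro ε hε
    have hrhs_nn : 0 ≤ (‖xbar - xstar‖ + ε) / r :=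
      div_nonneg (by positivity) hrδ_pos.le
    apply Real.sSup_le _ hrhs_nn
    rintro val ⟨x, ⟨hxVp, hxd⟩, rfl⟩
    rw [hunique, infDist_singleton] at hxd
    have hxxs : ‖xbar - x‖ ≤ ‖xbar - xstar‖ + ε := by
      have h1 : xbar - x = (xbar - xstar) + (xstar - x) := by abel
      have h2 : ‖xstar - x‖ = dist x xstar := by rw [dist_comm, dist_eq_norm]
      calc ‖xbar - x‖ = ‖(xbar - xstar) + (xstar - x)‖ := by rw [← h1]
        _ ≤ ‖xbar - xstar‖ + ‖xstar - x‖ := norm_add_le _ _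
        _ ≤ ‖xbar - xstar‖ + ε := by rw [h2]; linarith
    by_cases hxF : x ∈ Fp
    · rw [hθ, if_pos hxF]
      rw [le_div_iff₀ hrδ_pos, one_mul]
      linarith [hnormge]
    · rw [hθ, if_neg hxF]
      -- there is a negative coordinate
      have hneg : ∃ i0, x i0 < 0 := by
        by_contra hc'
        push_neg at hc'
        exact hxF (by rw [hFp]; exact ⟨hxVp, hc'⟩)
      obtain ⟨i0, hi0⟩ := hneg
      set m : ℝ := Finset.univ.sup' Finset.univ_nonempty (fun i => -(x i)) with hm
      clear_value m
      obtain ⟨i1, _, hi1⟩ := Finset.exists_mem_eq_sup' (Finset.univ_nonempty (α := Fin n))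
        (fun i => -(x i))
      have hmge : ∀ i, -(x i) ≤ m := fun i => by
        rw [hm]; exact Finset.le_sup' (fun j => -(x j)) (Finset.mem_univ i)
      have hmpos : 0 < m := lt_of_lt_of_le (by linarith : (0:ℝ) < -(x i0)) (hmge i0)
      have hmr : 0 < m + r := by linarith [hrδ_pos]
      set t : ℝ := m / (m + r) with htdef
      clear_value t
      have ht0 : 0 ≤ t := by
        rw [htdef]; exact div_nonneg hmpos.le hmr.le
      have ht1 : t ≤ 1 := by
        rw [htdef, div_le_one hmr]
        linarith [hrδ_pos]
      have htm : t * (m + r) = m := by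
        rw [htdef]; exact div_mul_cancel₀ m (ne_of_gt hmr)
      set y : EuclideanSpace ℝ (Fin n) := x + t • (xbar - x) with hydef
      have hyVp : y ∈ Vp := by
        have h1 : xbar - x ∈ Vp.direction := by
          have := AffineSubspace.vsub_mem_direction hxbarVp hxVp
          simpa [vsub_eq_sub] using this
        have := AffineSubspace.vadd_mem_of_mem_direction (Vp.direction.smul_mem t h1) hxVp
        have he : t • (xbar - x) +ᵥ x = y := by
          rw [vadd_eq_add, hydef]
          abel
        rwa [he] at this
      have hynn : ∀ i, 0 ≤ y i := by
        intro i
        have h1 : y i = x i + t * (xbar i - x i) := rfl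
        rw [h1]
        have h2 : -(x i) ≤ m := hmge i
        have h3 : r ≤ xbar i := hrle i
        have h4 : (1 - t) * (-(m)) ≤ (1 - t) * x i := by
          apply mul_le_mul_of_nonneg_left _ (by linarith)
          linarith
        have h5 : t * r ≤ t * xbar i := mul_le_mul_of_nonneg_left h3 ht0
        nlinarith [htm]
      have hyF : y ∈ Fp := by rw [hFp]; exact ⟨hyVp, hynn⟩
      have hnum : infDist x Fp ≤ t * ‖xbar - x‖ := by
        have h1 : infDist x Fp ≤ dist x y := infDist_le_dist_of_mem hyF
        have h2 : dist x y = t * ‖xbar - x‖ := by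
          rw [dist_eq_norm, hydef]
          have he : x - (x + t • (xbar - x)) = -(t • (xbar - x)) := by abel
          rw [he, norm_neg, norm_smul, Real.norm_eq_abs, abs_of_nonneg ht0]
        linarith [h1, h2.le]
      have hden : m ≤ infDist x {y : EuclideanSpace ℝ (Fin n) | ∀ i, 0 ≤ y i} := by
        apply le_infDist_of
        · exact ⟨0, fun i => le_rfl⟩
        intro z hz
        have h1 : |(x - z) i1| ≤ ‖x - z‖ := coord_le_norm _ i1
        have h2 : (x - z) i1 = x i1 - z i1 := rfl
        have h3 : x i1 = -m := by rw [hi1] at hm; rw [hm]; ring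
        have h4 : 0 ≤ z i1 := hz i1
        have h5 : |x i1 - z i1| = m + z i1 := by
          rw [h3, abs_of_nonpos (by linarith)]
          ring
        rw [dist_eq_norm]
        rw [h2, h5] at h1
        linarith
      have hdenpos : 0 < infDist x {y : EuclideanSpace ℝ (Fin n) | ∀ i, 0 ≤ y i} :=
        lt_of_lt_of_le hmpos hden
      have hratio : infDist x Fp / infDist x {y : EuclideanSpace ℝ (Fin n) | ∀ i, 0 ≤ y i}
          ≤ (t * ‖xbar - x‖) / m :=
        div_le_div₀ (by positivity) hnum hmpos hden
      have heq2 : (t * ‖xbar - x‖) / m = ‖xbar - x‖ / (m + r) := by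
        have hm0 : m ≠ 0 := ne_of_gt hmpos
        have hmr0 : m + r ≠ 0 := ne_of_gt hmr
        rw [htdef]
        field_simp
      have hle2 : ‖xbar - x‖ / (m + r) ≤ ‖xbar - x‖ / r :=
        div_le_div_of_nonneg_left (norm_nonneg _) hrδ_pos (by linarith)
      calc infDist x Fp / infDist x {y : EuclideanSpace ℝ (Fin n) | ∀ i, 0 ≤ y i}
          ≤ (t * ‖xbar - x‖) / m := hratio
        _ = ‖xbar - x‖ / (m + r) := heq2
        _ ≤ ‖xbar - x‖ / r := hle2
        _ ≤ (‖xbar - xstar‖ + ε) / r := (div_le_div_iff_of_pos_right hrδ_pos).mpr hxxs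
  have hθp_le : θp ≤ ‖xbar - xstar‖ / r := by
    have h2 : Tendsto (fun ε : ℝ => (‖xbar - xstar‖ + ε) / r) (𝓝[>] (0:ℝ))
        (𝓝 ((‖xbar - xstar‖ + 0) / r)) := by
      apply Tendsto.mono_left _ nhdsWithin_le_nhds
      exact Tendsto.div_const (tendsto_const_nhds.add tendsto_id) r
    rw [add_zero] at h2
    refine le_of_tendsto_of_tendsto hθp h2 ?_
    filter_upwards [self_mem_nhdsWithin] with ε hε
    exact hsupbound ε hε
  have hq_eq : infDist 0 (Vp : Set (EuclideanSpace ℝ (Fin n))) = ‖q‖ := by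
    apply le_antisymm
    · have h1 := infDist_le_dist_of_mem (x := (0 : EuclideanSpace ℝ (Fin n))) hqVp
      have h2 : dist (0 : EuclideanSpace ℝ (Fin n)) q = ‖q‖ := by
        rw [dist_eq_norm, zero_sub, norm_neg]
      rwa [h2] at h1
    · apply le_infDist_of ⟨q, hqVp⟩
      intro v hv
      have h2 : dist (0 : EuclideanSpace ℝ (Fin n)) v = ‖v‖ := by
        rw [dist_eq_norm, zero_sub, norm_neg]
      rw [h2]
      exact hqmin v hv
  rw [hq_eq]
  have hbr2 : δ / (‖q‖ * μd) + infDist 0 Sstar + Metric.diam Sstar = Bq := by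
    rw [hBq, hdS]; ring
  rw [hbr2, norm_sub_rev]
  have hone : 1 ≤ Real.sqrt n / δ * Bq * r := by
    rw [div_mul_eq_mul_div, div_mul_eq_mul_div, le_div_iff₀ hδ, one_mul]
    nlinarith [hmain]
  calc θp ≤ ‖xbar - xstar‖ / r := hθp_le
    _ ≤ ‖xbar - xstar‖ * (Real.sqrt n / δ) * Bq := by
        rw [div_le_iff₀ hrδ_pos]
        nlinarith [mul_le_mul_of_nonneg_left hone (norm_nonneg (xbar - xstar))]
end
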